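/- Let f : [0,1) → [0,1) be a piecewise increasing contraction with n discontinuity points. Assume ℓ of these discontinuity points have image 0 under f. Then f has at most n + 1 − ℓ periodic orbits. -/

import Mathlib

open Set Function

lemma iter_period (f : ℝ → ℝ) {p : ℕ} {y : ℝ} (hy : f^[p] y = y) :
    ∀ m k : ℕ, f^[m + k * p] y = f^[m] y := by
  intro m k
  induction k with
  | zero => simp
  | succ k ih =>
    have h1 : m + (k + 1) * p = (m + k * p) + p := by ring
    rw [h1, Function.iterate_add_apply, hy, ih]

lemma range_rot (f : ℝ → ℝ) {p : ℕ} (hp : 1 ≤ p) {y : ℝ} (hy : f^[p] y = y) (c : ℕ) :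
    Set.range (fun m => f^[m] (f^[c] y)) = Set.range (fun m => f^[m] y) := by
  ext w
  constructor
  · rintro ⟨m, rfl⟩
    exact ⟨m + c, by simpa using Function.iterate_add_apply f m c y⟩
  · rintro ⟨m, rfl⟩
    obtain ⟨q, hq⟩ : ∃ q, p = q + 1 := ⟨p - 1, by omega⟩
    refine ⟨m + c * q, ?_⟩
    simp only
    rw [← Function.iterate_add_apply]
    have h2 : m + c * q + c = m + c * p := by rw [hq]; ring
    rw [h2, iter_period f hy m c]

/-- The attraction predicate: orbit of `s` converges (with phase) to the periodic
orbit of `y`, with geometric rate. -/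
def PP (f : ℝ → ℝ) (lam : ℝ) (s : ℝ) (O : Set ℝ) : Prop :=
  ∃ p : ℕ, ∃ y : ℝ, 1 ≤ p ∧ f^[p] y = y ∧ O = Set.range (fun m => f^[m] y) ∧
    ∃ C : ℝ, 0 ≤ C ∧ ∀ k i : ℕ, |f^[k * p + i] s - f^[i] y| ≤ lam ^ k * C

lemma PP_unique {f : ℝ → ℝ} {lam : ℝ} (hlam0 : 0 < lam) (hlam1 : lam < 1)
    {s : ℝ} {O O' : Set ℝ} (h : PP f lam s O) (h' : PP f lam s O') : O = O' := by
  obtain ⟨p, y, hp, hpy, hO, C, hC0, hB⟩ := h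
  obtain ⟨p', y', hp', hpy', hO', C', hC0', hB'⟩ := h'
  have hyy : y = y' := by
    by_contra hne
    have hε : 0 < |y - y'| := abs_pos.mpr (sub_ne_zero.mpr hne)
    obtain ⟨k, hk⟩ := exists_pow_lt_of_lt_one
      (div_pos hε (by linarith : (0:ℝ) < C + C' + 1)) hlam1
    have hkp : lam ^ k * (C + C' + 1) < |y - y'| := by
      rw [← lt_div_iff₀ (by linarith : (0:ℝ) < C + C' + 1)]
      exact hk
    have b1 := hB (k * p') 0
    have b2 := hB' (k * p) 0
    have e : k * p' * p + 0 = k * p * p' + 0 := by ring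
    rw [e] at b1
    simp only [Function.iterate_zero_apply] at b1 b2
    have hkk : lam ^ (k * p') ≤ lam ^ k :=
      pow_le_pow_of_le_one hlam0.le hlam1.le (Nat.le_mul_of_pos_right k (by omega))
    have hkk' : lam ^ (k * p) ≤ lam ^ k :=
      pow_le_pow_of_le_one hlam0.le hlam1.le (Nat.le_mul_of_pos_right k (by omega))
    have t1 : |f^[k * p * p' + 0] s - y| ≤ lam ^ k * C :=
      b1.trans (mul_le_mul_of_nonneg_right hkk hC0)
    have t2 : |f^[k * p * p' + 0] s - y'| ≤ lam ^ k * C' :=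
      b2.trans (mul_le_mul_of_nonneg_right hkk' hC0')
    have htri : |y - y'| ≤ |f^[k * p * p' + 0] s - y| + |f^[k * p * p' + 0] s - y'| := by
      have := abs_sub_le y (f^[k * p * p' + 0] s) y'
      rwa [abs_sub_comm y (f^[k * p * p' + 0] s)] at this
    have hpk : (0:ℝ) ≤ lam ^ k := pow_nonneg hlam0.le k
    nlinarith
  rw [hO, hO', hyy]

lemma iter_period' (f : ℝ → ℝ) {p : ℕ} {y : ℝ} (hy : f^[p] y = y) :
    ∀ m k : ℕ, f^[m + k * p] y = f^[m] y := by
  intro m k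
  induction k with
  | zero => simp
  | succ k ih =>
    have h1 : m + (k + 1) * p = (m + k * p) + p := by ring
    rw [h1, Function.iterate_add_apply, hy, ih]

lemma exists_witness (f : ℝ → ℝ) (D : Set ℝ) (lam : ℝ)
    (hlam0 : 0 < lam) (hlam1 : lam < 1)
    (hDfin : D.Finite) (hDsub : D ⊆ Set.Ico 0 1)
    (hmap : Set.MapsTo f (Set.Ico 0 1) (Set.Ico 0 1))
    (hrc : ∀ x ∈ Set.Ico (0:ℝ) 1, ContinuousWithinAt f (Set.Ici x) x)
    (hcont : ∀ x ∈ Set.Ico (0:ℝ) 1, x ∉ D → ContinuousWithinAt f (Set.Ico 0 1) x)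
    (hpiece : ∀ x ∈ Set.Ico (0:ℝ) 1, ∀ y ∈ Set.Ico (0:ℝ) 1, x < y →
      (∀ s ∈ insert (0:ℝ) D, s ∉ Set.Ioc x y) → f x < f y ∧ f y - f x ≤ lam * (y - x))
    (x : ℝ) (hx : x ∈ Set.Ico (0:ℝ) 1) (p : ℕ) (hp : 1 ≤ p) (hxp : f^[p] x = x) :
    ∃ s ∈ insert (0:ℝ) D, ∃ j₀ : ℕ, ∃ C : ℝ, 0 ≤ C ∧
      ∀ k i : ℕ, |f^[k * p + i] s - f^[i] (f^[j₀] x)| ≤ lam ^ k * C := by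
  have hIter : ∀ z ∈ Set.Ico (0:ℝ) 1, ∀ j, f^[j] z ∈ Set.Ico (0:ℝ) 1 :=
    fun z hz j => Set.MapsTo.iterate hmap j hz
  have pAdd : ∀ m k : ℕ, f^[m + k * p] x = f^[m] x := iter_period' f hxp
  by_cases hc1 : ∃ j, f^[j] x ∈ insert (0:ℝ) D
  · obtain ⟨j₀, hj₀⟩ := hc1
    refine ⟨f^[j₀] x, hj₀, j₀, 0, le_rfl, ?_⟩
    intro k i
    have e : f^[k * p + i] (f^[j₀] x) = f^[i] (f^[j₀] x) := by
      rw [← Function.iterate_add_apply, ← Function.iterate_add_apply]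
      have h2 : k * p + i + j₀ = (i + j₀) + k * p := by ring
      rw [h2, pAdd]
    rw [e, sub_self, abs_zero, mul_zero]
  push_neg at hc1
  -- The set of points to the left of x whose whole forward orbit stays, at each
  -- time, in the same piece as the orbit of x (and below it).
  set R : Set ℝ := {z | z ∈ Set.Ico (0:ℝ) 1 ∧ z ≤ x ∧
      ∀ j, f^[j] z ≤ f^[j] x ∧ ∀ s ∈ insert (0:ℝ) D, s ∉ Set.Ioc (f^[j] z) (f^[j] x)}
    with hRdef
  have hxR : x ∈ R := by
    refine ⟨hx, le_rfl, fun j => ⟨le_rfl, fun s _ hmem => ?_⟩⟩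
    exact absurd hmem.2 (not_le.mpr hmem.1)
  have hRne : R.Nonempty := ⟨x, hxR⟩
  have hRbdd : BddBelow R := ⟨0, fun w hw => hw.1.1⟩
  have contractR : ∀ z ∈ R, ∀ j, f^[j] x - f^[j] z ≤ lam ^ j * (x - z) := by
    intro z hz j
    induction j with
    | zero => simp
    | succ j ih =>
      rcases eq_or_lt_of_le (hz.2.2 j).1 with he | hl
      · rw [Function.iterate_succ_apply', Function.iterate_succ_apply', he, sub_self]
        exact mul_nonneg (pow_nonneg hlam0.le _) (sub_nonneg.mpr hz.2.1)
      · have hpc := hpiece _ (hIter z hz.1 j) _ (hIter x hx j) hl (hz.2.2 j).2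
        rw [Function.iterate_succ_apply', Function.iterate_succ_apply']
        calc f (f^[j] x) - f (f^[j] z) ≤ lam * (f^[j] x - f^[j] z) := hpc.2
          _ ≤ lam * (lam ^ j * (x - z)) := mul_le_mul_of_nonneg_left ih hlam0.le
          _ = lam ^ (j + 1) * (x - z) := by ring
  -- images of R
  set Rim : ℕ → Set ℝ := fun j => (f^[j]) '' R with hRimdef
  have hRimne : ∀ j, (Rim j).Nonempty := fun j => ⟨f^[j] x, x, hxR, rfl⟩
  have hRimbdd : ∀ j, BddBelow (Rim j) := by
    rintro j
    exact ⟨0, by rintro w ⟨z, hz, rfl⟩; exact (hIter z hz.1 j).1⟩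
  have hwle : ∀ j, ∀ w ∈ Rim j, w ≤ f^[j] x := by
    rintro j w ⟨z, hz, rfl⟩; exact (hz.2.2 j).1
  have hb0 : ∀ j, 0 ≤ sInf (Rim j) := by
    intro j
    refine le_csInf (hRimne j) ?_
    rintro w ⟨z, hz, rfl⟩; exact (hIter z hz.1 j).1
  have hbx : ∀ j, sInf (Rim j) ≤ f^[j] x := fun j => csInf_le (hRimbdd j) ⟨x, hxR, rfl⟩
  have hbIco : ∀ j, sInf (Rim j) ∈ Set.Ico (0:ℝ) 1 :=
    fun j => ⟨hb0 j, lt_of_le_of_lt (hbx j) (hIter x hx j).2⟩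
  have hsing : ∀ j, ∀ s ∈ insert (0:ℝ) D, s ∉ Set.Ioc (sInf (Rim j)) (f^[j] x) := by
    intro j s hs hmem
    obtain ⟨w, hw, hws⟩ := exists_lt_of_csInf_lt (hRimne j) hmem.1
    obtain ⟨z, hz, rfl⟩ := hw
    exact (hz.2.2 j).2 s hs ⟨hws, hmem.2⟩
  have hmono : ∀ j, ∀ w ∈ Rim j, f (sInf (Rim j)) ≤ f w := by
    intro j w hw
    rcases eq_or_lt_of_le (csInf_le (hRimbdd j) hw) with he | hl
    · rw [he]
    · have hwIco : w ∈ Set.Ico (0:ℝ) 1 := by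
        obtain ⟨z, hz, rfl⟩ := hw; exact hIter z hz.1 j
      refine (hpiece _ (hbIco j) _ hwIco hl ?_).1.le
      intro s hs hmem
      exact hsing j s hs ⟨hmem.1, hmem.2.trans (hwle j w hw)⟩
  have hbsucc : ∀ j, sInf (Rim (j + 1)) = f (sInf (Rim j)) := by
    intro j
    apply le_antisymm
    · apply le_of_forall_pos_le_add
      intro ε hε
      have hcw := hrc (sInf (Rim j)) (hbIco j)
      rw [Metric.continuousWithinAt_iff] at hcw
      obtain ⟨δ, hδ0, hδ⟩ := hcw ε hε
      obtain ⟨w, hw, hwlt⟩ := exists_lt_of_csInf_lt (hRimne j)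
        (lt_add_of_pos_right (sInf (Rim j)) hδ0)
      have hbw : sInf (Rim j) ≤ w := csInf_le (hRimbdd j) hw
      have hdist : dist w (sInf (Rim j)) < δ := by
        rw [Real.dist_eq, abs_of_nonneg (sub_nonneg.mpr hbw)]; linarith
      have hfd := hδ (Set.mem_Ici.mpr hbw) hdist
      rw [Real.dist_eq] at hfd
      have hfw : f (sInf (Rim j)) ≤ f w := hmono j w hw
      obtain ⟨z, hz, rfl⟩ := hw
      have hmem : f (f^[j] z) ∈ Rim (j + 1) :=
        ⟨z, hz, by rw [Function.iterate_succ_apply']⟩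
      have h1 : sInf (Rim (j + 1)) ≤ f (f^[j] z) := csInf_le (hRimbdd _) hmem
      have h2 : f (f^[j] z) - f (sInf (Rim j)) < ε := (abs_lt.mp hfd).2
      linarith
    · refine le_csInf (hRimne _) ?_
      rintro v ⟨z, hz, rfl⟩
      rw [Function.iterate_succ_apply']
      exact hmono j (f^[j] z) ⟨z, hz, rfl⟩
  have hR0 : Rim 0 = R := by
    simp [hRimdef]
  have hbiter : ∀ j, f^[j] (sInf R) = sInf (Rim j) := by
    intro j
    induction j with
    | zero => simp [hR0]
    | succ j ih => rw [Function.iterate_succ_apply', ih, ← hbsucc j]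
  set a := sInf R with ha
  have haR : a ∈ R := by
    refine ⟨?_, csInf_le hRbdd hxR, fun j => ⟨?_, ?_⟩⟩
    · have h0 := hbIco 0
      rw [hR0] at h0
      rwa [ha]
    · rw [hbiter j]; exact hbx j
    · rw [hbiter j]; exact hsing j
  have haIco : a ∈ Set.Ico (0:ℝ) 1 := haR.1
  -- main claim: some iterate of a is a singular point
  have hjS : ∃ j₀, f^[j₀] a ∈ insert (0:ℝ) D := by
    by_contra hcon
    push_neg at hcon
    have ha0 : 0 < a := by
      rcases lt_or_eq_of_le haIco.1 with h | h
      · exact h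
      · exfalso
        apply hcon 0
        rw [Function.iterate_zero_apply, ← h]
        exact Set.mem_insert 0 D
    -- finite singular set machinery
    have hSfin : (insert (0:ℝ) D).Finite := hDfin.insert 0
    have h0SF : (0:ℝ) ∈ hSfin.toFinset := by simp
    have hSFne : hSfin.toFinset.Nonempty := ⟨0, h0SF⟩
    set εd : ℝ → ℝ := fun w => ((hSfin.toFinset).image fun s => |w - s|).min'
      (hSFne.image _) with hεddef
    have hεd_le : ∀ w s, s ∈ insert (0:ℝ) D → εd w ≤ |w - s| := by
      intro w s hs
      exact Finset.min'_le _ _ (Finset.mem_image_of_mem _ (hSfin.mem_toFinset.mpr hs))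
    have hεd_pos : ∀ w, w ∉ insert (0:ℝ) D → 0 < εd w := by
      intro w hw
      have hmem : εd w ∈ (hSfin.toFinset).image fun s => |w - s| :=
        Finset.min'_mem ((hSfin.toFinset).image fun s => |w - s|) (hSFne.image _)
      obtain ⟨s, hsSF, heq⟩ := Finset.mem_image.mp hmem
      rw [← heq]
      refine abs_pos.mpr (sub_ne_zero.mpr ?_)
      intro h
      exact hw (h ▸ hSfin.mem_toFinset.mp hsSF)
    have hrpne : (Finset.range p).Nonempty := Finset.nonempty_range_iff.mpr (by omega)
    set d : ℝ := ((Finset.range p).image fun i => εd (f^[i] x)).min' (hrpne.image _)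
      with hddef
    have hd_pos : 0 < d := by
      have hmem : d ∈ (Finset.range p).image fun i => εd (f^[i] x) :=
        Finset.min'_mem ((Finset.range p).image fun i => εd (f^[i] x)) (hrpne.image _)
      obtain ⟨i, _, heq⟩ := Finset.mem_image.mp hmem
      rw [← heq]
      exact hεd_pos _ (hc1 i)
    have hd_le : ∀ j s, s ∈ insert (0:ℝ) D → d ≤ |f^[j] x - s| := by
      intro j s hs
      have hmod : f^[j] x = f^[j % p] x := by
        conv_lhs => rw [← Nat.mod_add_div' j p]
        rw [pAdd]
      have h1 : d ≤ εd (f^[j % p] x) :=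
        Finset.min'_le _ _ (Finset.mem_image_of_mem _
          (Finset.mem_range.mpr (Nat.mod_lt j (by omega))))
      rw [hmod]
      exact h1.trans (hεd_le _ s hs)
    obtain ⟨J, hJ⟩ := exists_pow_lt_of_lt_one (half_pos hd_pos) hlam1
    set η : ℕ → ℝ := fun j => min (εd (f^[j] a)) (d / 2) with hηdef
    have hη : ∀ j, 0 < η j := fun j => lt_min (hεd_pos _ (hcon j)) (half_pos hd_pos)
    have hCW : ∀ j, ContinuousWithinAt (f^[j]) (Set.Ico (0:ℝ) 1) a := by
      intro j
      induction j with
      | zero => simpa using continuousWithinAt_id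
      | succ j ih =>
        rw [Function.iterate_succ']
        exact ContinuousWithinAt.comp
          (hcont _ (hIter a haIco j) (fun hD => hcon j (Set.mem_insert_of_mem 0 hD)))
          ih (Set.MapsTo.iterate hmap j)
    have hδall : ∀ N : ℕ, ∃ δ > 0, ∀ j ≤ N, ∀ z ∈ Set.Ico (0:ℝ) 1,
        |z - a| < δ → |f^[j] z - f^[j] a| < η j := by
      intro N
      induction N with
      | zero =>
        refine ⟨η 0, hη 0, ?_⟩
        intro j hj z _ hlt
        interval_cases j
        simpa using hlt
      | succ N ih =>
        obtain ⟨δ₁, hδ₁0, hδ₁⟩ := ih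
        have hc := hCW (N + 1)
        rw [Metric.continuousWithinAt_iff] at hc
        obtain ⟨δ₂, hδ₂0, hδ₂⟩ := hc (η (N + 1)) (hη _)
        refine ⟨min δ₁ δ₂, lt_min hδ₁0 hδ₂0, ?_⟩
        intro j hj z hz hlt
        by_cases hjN : j ≤ N
        · exact hδ₁ j hjN z hz (lt_of_lt_of_le hlt (min_le_left _ _))
        · have hjeq : j = N + 1 := by omega
          subst hjeq
          have := hδ₂ hz (by rw [Real.dist_eq]; exact lt_of_lt_of_le hlt (min_le_right _ _))
          rwa [Real.dist_eq] at this
    obtain ⟨δ, hδ0, hδ⟩ := hδall J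
    set z := max (a / 2) (a - δ / 2) with hzdef
    have hz_lt_a : z < a := max_lt (by linarith) (by linarith)
    have hz_pos : 0 < z := lt_of_lt_of_le (by linarith : (0:ℝ) < a / 2) (le_max_left _ _)
    have hzx : z ≤ x := le_trans hz_lt_a.le haR.2.1
    have hzIco : z ∈ Set.Ico (0:ℝ) 1 := ⟨hz_pos.le, lt_of_le_of_lt hzx hx.2⟩
    have hz_close : |z - a| < δ := by
      have h1 : a - δ / 2 ≤ z := le_max_right _ _
      rw [abs_sub_comm, abs_of_nonneg (by linarith : (0:ℝ) ≤ a - z)]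
      linarith
    have hclose : ∀ j ≤ J, |f^[j] z - f^[j] a| < η j := fun j hj => hδ j hj z hzIco hz_close
    -- order below a up to time J
    have ord1 : ∀ j, j ≤ J → f^[j] z ≤ f^[j] a := by
      intro j
      induction j with
      | zero => intro _; exact hz_lt_a.le
      | succ j ih =>
        intro hj1
        have hj : j ≤ J := Nat.le_of_succ_le hj1
        rcases eq_or_lt_of_le (ih hj) with he | hl
        · rw [Function.iterate_succ_apply', Function.iterate_succ_apply', he]
        · have hsf : ∀ s ∈ insert (0:ℝ) D, s ∉ Set.Ioc (f^[j] z) (f^[j] a) := by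
            intro s hs hmem
            have h1 := hclose j hj
            have h2 : εd (f^[j] a) ≤ |f^[j] a - s| := hεd_le _ s hs
            have h3 : |f^[j] a - s| = f^[j] a - s :=
              abs_of_nonneg (by linarith [hmem.2] : (0:ℝ) ≤ f^[j] a - s)
            have h4 : η j ≤ εd (f^[j] a) := min_le_left _ _
            rw [abs_sub_comm, abs_of_nonneg (sub_nonneg.mpr hl.le)] at h1
            have h5 := hmem.1
            linarith
          rw [Function.iterate_succ_apply', Function.iterate_succ_apply']
          exact (hpiece _ (hIter z hzIco j) _ (hIter a haIco j) hl hsf).1.le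
    -- closeness to orbit of x after time J
    have singd : ∀ m, f^[m] z ≤ f^[m] x → f^[m] x - f^[m] z < d →
        ∀ s ∈ insert (0:ℝ) D, s ∉ Set.Ioc (f^[m] z) (f^[m] x) := by
      intro m hle hlt s hs hmem
      have h1 := hd_le m s hs
      have h2 : |f^[m] x - s| = f^[m] x - s := abs_of_nonneg (by linarith [hmem.2])
      have h3 := hmem.1
      linarith
    have key2 : ∀ m, f^[J + m] z ≤ f^[J + m] x ∧ f^[J + m] x - f^[J + m] z < d := by
      intro m
      induction m with
      | zero =>
        have hza := ord1 J le_rfl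
        have hax := (haR.2.2 J).1
        have hcJ : f^[J] x - f^[J] a ≤ lam ^ J * (x - a) := contractR a haR J
        have hxa1 : x - a ≤ 1 := by
          have := hx.2; have := haIco.1; linarith
        have hlamJ : lam ^ J * (x - a) ≤ lam ^ J := by
          nlinarith [pow_nonneg hlam0.le J]
        have hcl := hclose J le_rfl
        rw [abs_sub_comm, abs_of_nonneg (sub_nonneg.mpr hza)] at hcl
        have hηJ : η J ≤ d / 2 := min_le_right _ _
        constructor
        · simpa using le_trans hza hax
        · simp only [Nat.add_zero]
          linarith
      | succ m ih =>
        obtain ⟨hle, hlt⟩ := ih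
        have hsf := singd (J + m) hle hlt
        rw [show J + (m + 1) = (J + m) + 1 from rfl]
        rcases eq_or_lt_of_le hle with he | hl
        · rw [Function.iterate_succ_apply', Function.iterate_succ_apply', he, sub_self]
          exact ⟨le_rfl, hd_pos⟩
        · have hpc := hpiece _ (hIter z hzIco (J + m)) _ (hIter x hx (J + m)) hl hsf
          rw [Function.iterate_succ_apply', Function.iterate_succ_apply']
          refine ⟨hpc.1.le, ?_⟩
          have h2 : lam * (f^[J + m] x - f^[J + m] z) ≤ f^[J + m] x - f^[J + m] z := by
            nlinarith [sub_nonneg.mpr hle]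
          linarith [hpc.2]
    -- z belongs to R : contradiction with a = sInf R
    have hzR : z ∈ R := by
      refine ⟨hzIco, hzx, fun j => ?_⟩
      by_cases hj : j ≤ J
      · refine ⟨le_trans (ord1 j hj) (haR.2.2 j).1, ?_⟩
        intro s hs hmem
        by_cases hsa : s ≤ f^[j] a
        · have h1 := hclose j hj
          have h2 : εd (f^[j] a) ≤ |f^[j] a - s| := hεd_le _ s hs
          have h3 : |f^[j] a - s| = f^[j] a - s := abs_of_nonneg (by linarith)
          have h4 : η j ≤ εd (f^[j] a) := min_le_left _ _
          rw [abs_sub_comm, abs_of_nonneg (sub_nonneg.mpr (ord1 j hj))] at h1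
          have h5 := hmem.1
          linarith
        · exact (haR.2.2 j).2 s hs ⟨not_le.mp hsa, hmem.2⟩
      · have hj' : J ≤ j := le_of_not_ge hj
        have hk := key2 (j - J)
        rw [Nat.add_sub_cancel' hj'] at hk
        exact ⟨hk.1, singd j hk.1 hk.2⟩
    exact absurd (csInf_le hRbdd hzR) (not_le.mpr hz_lt_a)
  -- conclude with the witness f^[j₀] a
  obtain ⟨j₀, hj₀⟩ := hjS
  refine ⟨f^[j₀] a, hj₀, j₀, x - a, sub_nonneg.mpr haR.2.1, ?_⟩
  intro k i
  have e1 : f^[k * p + i] (f^[j₀] a) = f^[k * p + i + j₀] a :=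
    (Function.iterate_add_apply f _ j₀ a).symm
  have e2 : f^[i] (f^[j₀] x) = f^[k * p + i + j₀] x := by
    rw [← Function.iterate_add_apply]
    have h2 : k * p + i + j₀ = (i + j₀) + k * p := by ring
    rw [h2, pAdd]
  rw [e1, e2]
  have h1 : f^[k * p + i + j₀] a ≤ f^[k * p + i + j₀] x := (haR.2.2 _).1
  have h2 : f^[k * p + i + j₀] x - f^[k * p + i + j₀] a ≤ lam ^ (k * p + i + j₀) * (x - a) :=
    contractR a haR _
  have h3 : lam ^ (k * p + i + j₀) ≤ lam ^ k := by
    apply pow_le_pow_of_le_one hlam0.le hlam1.le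
    have : k ≤ k * p := Nat.le_mul_of_pos_right k (by omega)
    omega
  rw [abs_sub_comm, abs_of_nonneg (sub_nonneg.mpr h1)]
  exact h2.trans (mul_le_mul_of_nonneg_right h3 (sub_nonneg.mpr haR.2.1))

/-- A piecewise increasing contraction of [0,1) with `n` discontinuity
points (set `D`), `ℓ` of which are mapped to `0`, has at most `n + 1 - ℓ` periodic
orbits.  The singular set is `{0} ∪ D` and `f` is increasing and `λ`-Lipschitz on each
piece of the induced partition. -/
theorem stmt_3 (f : ℝ → ℝ) (D : Set ℝ) (lam : ℝ) (n ℓ : ℕ)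
    (hlam0 : 0 < lam) (hlam1 : lam < 1)
    (hDfin : D.Finite) (hD0 : (0:ℝ) ∉ D) (hDsub : D ⊆ Set.Ico 0 1)
    (hmap : Set.MapsTo f (Set.Ico 0 1) (Set.Ico 0 1))
    (hrc : ∀ x ∈ Set.Ico (0:ℝ) 1, ContinuousWithinAt f (Set.Ici x) x)
    (hcont : ∀ x ∈ Set.Ico (0:ℝ) 1, x ∉ D → ContinuousWithinAt f (Set.Ico 0 1) x)
    (hpiece : ∀ x ∈ Set.Ico (0:ℝ) 1, ∀ y ∈ Set.Ico (0:ℝ) 1, x < y →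
      (∀ s ∈ insert (0:ℝ) D, s ∉ Set.Ioc x y) → f x < f y ∧ f y - f x ≤ lam * (y - x))
    (hn : D.ncard = n) (hl : {x | x ∈ D ∧ f x = 0}.ncard = ℓ) :
    {O : Set ℝ | ∃ x, x ∈ Set.Ico (0:ℝ) 1 ∧ (∃ p, 1 ≤ p ∧ f^[p] x = x) ∧
        O = Set.range fun m => f^[m] x}.Finite ∧
    {O : Set ℝ | ∃ x, x ∈ Set.Ico (0:ℝ) 1 ∧ (∃ p, 1 ≤ p ∧ f^[p] x = x) ∧
        O = Set.range fun m => f^[m] x}.ncard ≤ n + 1 - ℓ := by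
  have hSfin : (insert (0:ℝ) D).Finite := hDfin.insert 0
  set E : Set ℝ := {x | x ∈ D ∧ f x = 0} with hE
  have hEfin : E.Finite := hDfin.subset (fun z hz => hz.1)
  have hEsub : E ⊆ insert (0:ℝ) D := fun z hz => Set.mem_insert_of_mem _ hz.1
  set T : Set ℝ := insert (0:ℝ) D \ E with hT
  have hTfin : T.Finite := hSfin.diff
  have hTcard : T.ncard = n + 1 - ℓ := by
    rw [hT, Set.ncard_diff hEsub hEfin, Set.ncard_insert_of_notMem hD0 hDfin, hn, hl]
  set Orb := {O : Set ℝ | ∃ x, x ∈ Set.Ico (0:ℝ) 1 ∧ (∃ p, 1 ≤ p ∧ f^[p] x = x) ∧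
      O = Set.range fun m => f^[m] x} with hOrbdef
  have hex : ∀ O ∈ Orb, ∃ s, s ∈ T ∧ PP f lam s O := by
    intro O hO
    obtain ⟨x, hx, ⟨p, hp, hxp⟩, hOeq⟩ := hO
    obtain ⟨s, hsS, j₀, C, hC0, hbound⟩ :=
      exists_witness f D lam hlam0 hlam1 hDfin hDsub hmap hrc hcont hpiece x hx p hp hxp
    set y := f^[j₀] x with hy
    have hpy : f^[p] y = y := by
      rw [hy, ← Function.iterate_add_apply, Nat.add_comm, Function.iterate_add_apply, hxp]
    have hOr : O = Set.range (fun m => f^[m] y) := by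
      rw [hOeq, hy, range_rot f hp hxp j₀]
    by_cases hsE : s ∈ E
    · refine ⟨0, ⟨Set.mem_insert 0 D, fun h0 => hD0 h0.1⟩, p, f y, hp, ?_, ?_, C, hC0, ?_⟩
      · rw [← Function.iterate_succ_apply f p y, Function.iterate_succ_apply', hpy]
      · have h1 : f y = f^[1] y := (Function.iterate_one f).symm ▸ rfl
        rw [hOr, h1, range_rot f hp hpy 1]
      · intro k i
        have e1 : f^[k * p + i] (0:ℝ) = f^[k * p + i + 1] s := by
          rw [← hsE.2, ← Function.iterate_succ_apply f (k * p + i) s]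
        have e2 : f^[i] (f y) = f^[i + 1] y := by
          rw [← Function.iterate_succ_apply f i y]
        rw [e1, e2]
        have := hbound k (i + 1)
        have e3 : k * p + (i + 1) = k * p + i + 1 := by ring
        rwa [e3] at this
    · exact ⟨s, ⟨hsS, hsE⟩, p, y, hp, hpy, hOr, C, hC0, hbound⟩
  have hch : ∀ O : Set ℝ, ∃ s : ℝ, O ∈ Orb → s ∈ T ∧ PP f lam s O := by
    intro O
    by_cases h : O ∈ Orb
    · obtain ⟨s, hs⟩ := hex O h
      exact ⟨s, fun _ => hs⟩
    · exact ⟨0, fun h' => absurd h' h⟩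
  choose F hF using hch
  have hInj : Set.InjOn F Orb := by
    intro O hO O' hO' hFO
    exact PP_unique hlam0 hlam1 (hF O hO).2 (hFO ▸ (hF O' hO').2)
  have hImsub : F '' Orb ⊆ T := by
    rintro w ⟨O, hO, rfl⟩
    exact (hF O hO).1
  have hOrbfin : Orb.Finite := Set.Finite.of_finite_image (hTfin.subset hImsub) hInj
  refine ⟨hOrbfin, ?_⟩
  calc Orb.ncard = (F '' Orb).ncard := (Set.ncard_image_of_injOn hInj).symm
    _ ≤ T.ncard := Set.ncard_le_ncard hImsub hTfin
    _ = n + 1 - ℓ := hTcard
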